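/- arXiv:2110.04210 — 5 statements merged into one kernel-verified Lean document; each statement's English description precedes it below -/
import Mathlib

section
/- Let k be a Lie algebra over ℝ, finite-dimensional, and W a subspace of k. Then the centralizer in gl(k) of {ad_x : x ∈ W} equals the centralizer in gl(k) of {exp(ad_x) : x ∈ W}. -/
/-- The exponential of an endomorphism of a finite-dimensional real vector space,
computed via the matrix exponential in a chosen basis. -/
noncomputable def endExp {L : Type*} [LieRing L] [LieAlgebra ℝ L]
    {ι : Type*} [Fintype ι] [DecidableEq ι] (b : Module.Basis ι ℝ L)
    (f : Module.End ℝ L) : Module.End ℝ L :=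
  Matrix.toLin b b (NormedSpace.exp (LinearMap.toMatrix b b f))

open NormedSpace in
/-- If `F` commutes with `exp (t • A)` for all real `t`, then `F` commutes with `A`. -/
lemma commute_of_forall_commute_exp_smul {𝔸 : Type*} [NormedRing 𝔸] [NormedAlgebra ℝ 𝔸]
    [CompleteSpace 𝔸] {A F : 𝔸} (h : ∀ t : ℝ, Commute (exp (t • A)) F) :
    Commute A F := by
  have h1 : HasDerivAt (fun t : ℝ => exp (t • A)) (exp ((0 : ℝ) • A) * A) 0 :=
    hasDerivAt_exp_smul_const A (0 : ℝ)
  have h2 : HasDerivAt (fun t : ℝ => F * exp (t • A) - exp (t • A) * F)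
      (F * (exp ((0 : ℝ) • A) * A) - exp ((0 : ℝ) • A) * A * F) 0 :=
    (h1.const_mul F).sub (h1.mul_const F)
  have h3 : (fun t : ℝ => F * exp (t • A) - exp (t • A) * F) = fun _ => (0 : 𝔸) := by
    funext t
    rw [(h t).eq, sub_self]
  rw [h3] at h2
  have h4 : HasDerivAt (fun _ : ℝ => (0 : 𝔸)) 0 0 := hasDerivAt_const 0 0
  have h5 := h2.unique h4
  simp only [zero_smul, exp_zero, one_mul] at h5
  exact (sub_eq_zero.mp h5).symm

attribute [local instance] Matrix.linftyOpNormedAddCommGroup Matrix.linftyOpNormedRing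
  Matrix.linftyOpNormedAlgebra

theorem centralizer_ad_eq_centralizer_exp_ad {L : Type*} [LieRing L] [LieAlgebra ℝ L]
    [FiniteDimensional ℝ L] {ι : Type*} [Fintype ι] [DecidableEq ι] (b : Module.Basis ι ℝ L)
    (W : Submodule ℝ L) :
    Set.centralizer ((fun x => LieAlgebra.ad ℝ L x) '' (W : Set L)) =
      Set.centralizer ((fun x => endExp b (LieAlgebra.ad ℝ L x)) '' (W : Set L)) := by
  letI : CompleteSpace (Matrix ι ι ℝ) := FiniteDimensional.complete ℝ _
  ext f
  simp only [Set.mem_centralizer_iff, Set.mem_image, SetLike.mem_coe]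
  constructor
  · rintro hf m ⟨x, hx, rfl⟩
    have hc : LieAlgebra.ad ℝ L x * f = f * LieAlgebra.ad ℝ L x := hf _ ⟨x, hx, rfl⟩
    have hA : Commute (LinearMap.toMatrix b b (LieAlgebra.ad ℝ L x))
        (LinearMap.toMatrix b b f) := by
      show _ * _ = _ * _
      rw [← LinearMap.toMatrix_mul, ← LinearMap.toMatrix_mul, hc]
    have he := hA.exp_left
    apply (LinearMap.toMatrix b b).injective
    rw [LinearMap.toMatrix_mul, LinearMap.toMatrix_mul]
    show LinearMap.toMatrix b b (endExp b _) * _ = _ * LinearMap.toMatrix b b (endExp b _)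
    rw [endExp, LinearMap.toMatrix_toLin]
    exact he
  · rintro hf m ⟨x, hx, rfl⟩
    have hA : Commute (LinearMap.toMatrix b b (LieAlgebra.ad ℝ L x))
        (LinearMap.toMatrix b b f) := by
      apply commute_of_forall_commute_exp_smul
      intro t
      have h1 : endExp b (LieAlgebra.ad ℝ L (t • x)) * f
          = f * endExp b (LieAlgebra.ad ℝ L (t • x)) :=
        hf _ ⟨t • x, W.smul_mem t hx, rfl⟩
      have h2 : LinearMap.toMatrix b b (endExp b (LieAlgebra.ad ℝ L (t • x))) =
          NormedSpace.exp (t • LinearMap.toMatrix b b (LieAlgebra.ad ℝ L x)) := by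
        rw [endExp, map_smul, map_smul, LinearMap.toMatrix_toLin]
      have h3 := congrArg (LinearMap.toMatrix b b) h1
      rw [LinearMap.toMatrix_mul, LinearMap.toMatrix_mul, h2] at h3
      exact h3
    apply (LinearMap.toMatrix b b).injective
    rw [LinearMap.toMatrix_mul, LinearMap.toMatrix_mul]
    exact hA
end

section
/- Let A and B be unitary d×d matrices. Then ‖ABA⁻¹B⁻¹ − 1‖ ≤ √2 · ‖A − 1‖ · ‖B − 1‖, where ‖·‖ is the Frobenius norm. -/
open scoped Matrix

/-- The Frobenius norm ‖M‖ = √(tr(Mᴴ M)) of a complex matrix. -/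
noncomputable def frobeniusNorm {d : ℕ} (M : Matrix (Fin d) (Fin d) ℂ) : ℝ :=
  Real.sqrt (Mᴴ * M).trace.re

open Module.End in
set_option maxHeartbeats 1000000 in
lemma unitary_exists_eigenbasis {d : ℕ} (A : Matrix (Fin d) (Fin d) ℂ)
    (hA : A ∈ Matrix.unitaryGroup (Fin d) ℂ) :
    ∃ (b : OrthonormalBasis (Fin d) ℂ (EuclideanSpace ℂ (Fin d))) (μ : Fin d → ℂ),
      ∀ j, A *ᵥ ⇑(b j) = μ j • ⇑(b j) := by
  classical
  have h1 : A * Aᴴ = 1 := Matrix.mem_unitaryGroup_iff.mp hA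
  have h2 : Aᴴ * A = 1 := Matrix.mem_unitaryGroup_iff'.mp hA
  have hnorm : A * Aᴴ = Aᴴ * A := by rw [h1, h2]
  set C : Matrix (Fin d) (Fin d) ℂ := A + Aᴴ with hC
  set S : Matrix (Fin d) (Fin d) ℂ := (-Complex.I) • (A - Aᴴ) with hS
  have hCherm : C.IsHermitian := by
    unfold Matrix.IsHermitian
    simp [hC, Matrix.conjTranspose_add, add_comm]
  have hSherm : S.IsHermitian := by
    unfold Matrix.IsHermitian
    simp only [hS, Matrix.conjTranspose_smul, Matrix.conjTranspose_sub,
      Matrix.conjTranspose_conjTranspose, star_neg, Complex.star_def, Complex.conj_I, neg_neg]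
    rw [neg_smul, ← smul_neg, neg_sub]
  have hcomm : C * S = S * C := by
    simp only [hC, hS, Matrix.mul_smul, Matrix.smul_mul]
    congr 1
    simp only [Matrix.add_mul, Matrix.mul_add, Matrix.mul_sub, Matrix.sub_mul, hnorm]
    abel
  have h2A : C + Complex.I • S = (2:ℂ) • A := by
    rw [hC, hS, smul_smul]
    simp [Complex.I_mul_I, two_smul]
  have hCsym := (Matrix.isHermitian_iff_isSymmetric).mp hCherm
  have hSsym := (Matrix.isHermitian_iff_isSymmetric).mp hSherm
  set Cop := Matrix.toEuclideanLin C with hCop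
  set Sop := Matrix.toEuclideanLin S with hSop
  have hcomm' : Commute Cop Sop := by
    unfold Commute SemiconjBy
    ext x
    simp [hCop, hSop, Matrix.toEuclideanLin_apply, Matrix.mulVec_mulVec, hcomm]
  have hinj : Function.Injective
      (fun p : Eigenvalues Sop × Eigenvalues Cop => ((↑p.1, ↑p.2) : ℂ × ℂ)) := by
    intro p q h
    rw [Prod.ext_iff] at h
    exact Prod.ext (Subtype.ext h.1) (Subtype.ext h.2)
  have horth := (LinearMap.IsSymmetric.orthogonalFamily_eigenspace_inf_eigenspace
      hCsym hSsym).comp hinj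
  have htop := LinearMap.IsSymmetric.iSup_iSup_eigenspace_inf_eigenspace_eq_top_of_commute
      hCsym hSsym hcomm'
  have hsup : (⨆ p : Eigenvalues Sop × Eigenvalues Cop,
      (eigenspace Cop ↑p.2 ⊓ eigenspace Sop ↑p.1 : Submodule ℂ (EuclideanSpace ℂ (Fin d)))) = ⊤ := by
    refine le_antisymm le_top ?_
    rw [← htop]
    apply iSup_le; intro α; apply iSup_le; intro γ
    by_cases hb1 : eigenspace Cop α = ⊥
    · simp [hb1]
    by_cases hb2 : eigenspace Sop γ = ⊥
    · simp [hb2]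
    exact le_iSup (fun p : Eigenvalues Sop × Eigenvalues Cop =>
      (eigenspace Cop ↑p.2 ⊓ eigenspace Sop ↑p.1 : Submodule ℂ (EuclideanSpace ℂ (Fin d))))
      (⟨⟨γ, hb2⟩, ⟨α, hb1⟩⟩ : Eigenvalues Sop × Eigenvalues Cop)
  have hint : DirectSum.IsInternal (fun p : Eigenvalues Sop × Eigenvalues Cop =>
      (eigenspace Cop ↑p.2 ⊓ eigenspace Sop ↑p.1 : Submodule ℂ (EuclideanSpace ℂ (Fin d)))) :=
    horth.isInternal_iff.mpr (by rw [hsup, Submodule.top_orthogonal_eq_bot])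
  have hn : Module.finrank ℂ (EuclideanSpace ℂ (Fin d)) = d := by simp
  set b := hint.subordinateOrthonormalBasis hn horth with hb
  have key : ∀ j, ∃ μ : ℂ, Matrix.toEuclideanLin A (b j) = μ • (b j) := by
    intro j
    obtain ⟨hp1, hp2⟩ := hint.subordinateOrthonormalBasis_subordinate hn j horth
    obtain ⟨α, e1⟩ : ∃ α : ℂ, Cop (b j) = α • b j := ⟨_, mem_eigenspace_iff.mp hp1⟩
    obtain ⟨β, e2⟩ : ∃ β : ℂ, Sop (b j) = β • b j := ⟨_, mem_eigenspace_iff.mp hp2⟩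
    refine ⟨(α + Complex.I * β)/2, ?_⟩
    have e3 := congrArg (fun M => Matrix.toEuclideanLin M (b j)) h2A
    simp only [map_add, map_smul, LinearMap.add_apply, LinearMap.smul_apply] at e3
    rw [← hCop, ← hSop, e1, e2, smul_smul] at e3
    have e4 : ((2:ℂ)⁻¹ * 2) • Matrix.toEuclideanLin A (b j)
        = ((2:ℂ)⁻¹ • (α • b j + (Complex.I * β) • b j)) := by
      rw [← smul_smul, ← e3]
    rw [inv_mul_cancel₀ (two_ne_zero), one_smul] at e4
    rw [e4, ← add_smul, smul_smul]
    congr 1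
    ring
  choose μ hμ using key
  refine ⟨b, μ, fun j => ?_⟩
  have := congr(⇑$(hμ j))
  simpa only [Matrix.toEuclideanLin_apply, PiLp.smul_apply, WithLp.ofLp_smul] using this

lemma unitary_spectral {d : ℕ} (A : Matrix (Fin d) (Fin d) ℂ)
    (b : OrthonormalBasis (Fin d) ℂ (EuclideanSpace ℂ (Fin d))) (μ : Fin d → ℂ)
    (hbA : ∀ j, A *ᵥ ⇑(b j) = μ j • ⇑(b j)) :
    ∃ (U : Matrix (Fin d) (Fin d) ℂ),
      U ∈ Matrix.unitaryGroup (Fin d) ℂ ∧ Uᴴ * A * U = Matrix.diagonal μ := by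
  classical
  set U : Matrix (Fin d) (Fin d) ℂ :=
    (EuclideanSpace.basisFun (Fin d) ℂ).toBasis.toMatrix b.toBasis with hUdef
  have hU : U ∈ Matrix.unitaryGroup (Fin d) ℂ :=
    (EuclideanSpace.basisFun (Fin d) ℂ).toMatrix_orthonormalBasis_mem_unitary b
  have hUapp : ∀ i j, U i j = ⇑(b j) i := fun i j => rfl
  have hUmul : ∀ j, U *ᵥ Pi.single j 1 = ⇑(b j) := by
    intro j
    ext i
    simp [Matrix.mulVec_single, hUapp]
  have hUstar : ∀ j, (star U) *ᵥ ⇑(b j) = Pi.single j 1 := by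
    intro j
    rw [← hUmul, Matrix.mulVec_mulVec, Matrix.mem_unitaryGroup_iff'.mp hU, Matrix.one_mulVec]
  refine ⟨U, hU, ?_⟩
  have : star U = Uᴴ := rfl
  rw [← this]
  apply Matrix.toEuclideanLin.injective
  apply Module.Basis.ext (EuclideanSpace.basisFun (Fin d) ℂ).toBasis
  intro i
  simp only [Matrix.toEuclideanLin_apply, OrthonormalBasis.coe_toBasis,
    EuclideanSpace.basisFun_apply, EuclideanSpace.ofLp_single, ← Matrix.mulVec_mulVec,
    hUmul, hbA, Matrix.diagonal_mulVec_single, Matrix.mulVec_smul, hUstar, mul_one]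
  apply PiLp.ext
  intro j
  simp only [PiLp.smul_apply, EuclideanSpace.single_apply, smul_eq_mul, mul_ite, mul_one, mul_zero,
    EuclideanSpace.ofLp_single, WithLp.ofLp_smul, Pi.smul_apply, Pi.single_apply]

noncomputable def frobSq {d : ℕ} (M : Matrix (Fin d) (Fin d) ℂ) : ℝ :=
  ∑ i, ∑ j, Complex.normSq (M i j)

lemma frobSq_nonneg {d : ℕ} (M : Matrix (Fin d) (Fin d) ℂ) : 0 ≤ frobSq M :=
  Finset.sum_nonneg fun _ _ => Finset.sum_nonneg fun _ _ => Complex.normSq_nonneg _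

lemma trace_re_eq {d : ℕ} (M : Matrix (Fin d) (Fin d) ℂ) :
    (Mᴴ * M).trace.re = frobSq M := by
  rw [Matrix.trace, frobSq]
  rw [Complex.re_sum]
  rw [Finset.sum_comm]
  apply Finset.sum_congr rfl
  intro j _
  rw [Matrix.diag]
  rw [Matrix.mul_apply, Complex.re_sum]
  apply Finset.sum_congr rfl
  intro i _
  rw [Matrix.conjTranspose_apply]
  simp [Complex.normSq_apply, Complex.mul_re]

lemma frobeniusNorm_eq {d : ℕ} (M : Matrix (Fin d) (Fin d) ℂ) :
    frobeniusNorm M = Real.sqrt (frobSq M) := by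
  rw [frobeniusNorm, trace_re_eq]

lemma frobeniusNorm_nonneg {d : ℕ} (M : Matrix (Fin d) (Fin d) ℂ) : 0 ≤ frobeniusNorm M :=
  Real.sqrt_nonneg _

lemma frobeniusNorm_mul_unitary {d : ℕ} (M U : Matrix (Fin d) (Fin d) ℂ)
    (hU : U * Uᴴ = 1) : frobeniusNorm (M * U) = frobeniusNorm M := by
  rw [frobeniusNorm, frobeniusNorm, Matrix.conjTranspose_mul]
  rw [show Uᴴ * Mᴴ * (M * U) = Uᴴ * (Mᴴ * M) * U by noncomm_ring]
  rw [Matrix.trace_mul_cycle, ← Matrix.mul_assoc, hU, Matrix.one_mul]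

lemma frobeniusNorm_unitary_mul {d : ℕ} (M U : Matrix (Fin d) (Fin d) ℂ)
    (hU : Uᴴ * U = 1) : frobeniusNorm (U * M) = frobeniusNorm M := by
  rw [frobeniusNorm, frobeniusNorm, Matrix.conjTranspose_mul]
  rw [show Mᴴ * Uᴴ * (U * M) = Mᴴ * (Uᴴ * U) * M by noncomm_ring, hU, Matrix.mul_one]

lemma frobSq_diag_sub_one {d : ℕ} (μ : Fin d → ℂ) :
    frobSq (Matrix.diagonal μ - 1) = ∑ k, Complex.normSq (μ k - 1) := by
  rw [frobSq]
  apply Finset.sum_congr rfl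
  intro i _
  have h : ∀ j, (Matrix.diagonal μ - 1) i j = if i = j then μ i - 1 else 0 := by
    intro j
    by_cases h : i = j <;>
      simp [Matrix.sub_apply, Matrix.diagonal_apply, Matrix.one_apply, h]
  simp only [h, apply_ite Complex.normSq, Complex.normSq_zero]
  rw [Finset.sum_ite_eq Finset.univ i (fun _ => Complex.normSq (μ i - 1))]
  simp

-- the key diagonal commutator estimate
lemma frobSq_diag_comm {d : ℕ} (μ : Fin d → ℂ) (Z : Matrix (Fin d) (Fin d) ℂ) :
    frobSq (Matrix.diagonal μ * Z - Z * Matrix.diagonal μ) ≤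
      2 * (∑ k, Complex.normSq (μ k - 1)) * frobSq Z := by
  have step : ∀ i j : Fin d, Complex.normSq ((Matrix.diagonal μ * Z - Z * Matrix.diagonal μ) i j)
      ≤ 2 * (∑ k, Complex.normSq (μ k - 1)) * Complex.normSq (Z i j) := by
    intro i j
    have hentry : (Matrix.diagonal μ * Z - Z * Matrix.diagonal μ) i j
        = (μ i - μ j) * Z i j := by
      rw [Matrix.sub_apply, Matrix.diagonal_mul, Matrix.mul_diagonal]
      ring
    rw [hentry, Complex.normSq_mul]
    by_cases hij : i = j
    · subst hij
      simp only [sub_self, map_zero, zero_mul]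
      exact mul_nonneg (mul_nonneg (by norm_num)
        (Finset.sum_nonneg fun k _ => Complex.normSq_nonneg _)) (Complex.normSq_nonneg _)
    · have h1 : Complex.normSq (μ i - μ j) ≤
          2 * (Complex.normSq (μ i - 1) + Complex.normSq (μ j - 1)) := by
        have e : μ i - μ j = (μ i - 1) - (μ j - 1) := by ring
        rw [e, Complex.normSq_sub]
        have := Complex.normSq_nonneg ((μ i - 1) + (μ j - 1))
        rw [Complex.normSq_add] at this
        linarith
      have h2 : Complex.normSq (μ i - 1) + Complex.normSq (μ j - 1)
          ≤ ∑ k, Complex.normSq (μ k - 1) := by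
        have hsub := Finset.sum_le_sum_of_subset_of_nonneg
          (s := ({i, j} : Finset (Fin d))) (t := Finset.univ)
          (f := fun k => Complex.normSq (μ k - 1))
          (fun x _ => Finset.mem_univ x) (fun k _ _ => Complex.normSq_nonneg _)
        rwa [Finset.sum_pair hij] at hsub
      have h3 := Complex.normSq_nonneg (Z i j)
      nlinarith
  calc frobSq (Matrix.diagonal μ * Z - Z * Matrix.diagonal μ)
      ≤ ∑ i, ∑ j, 2 * (∑ k, Complex.normSq (μ k - 1)) * Complex.normSq (Z i j) := by
        rw [frobSq]
        exact Finset.sum_le_sum fun i _ => Finset.sum_le_sum fun j _ => step i j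
    _ = 2 * (∑ k, Complex.normSq (μ k - 1)) * frobSq Z := by
        simp only [frobSq, Finset.mul_sum]

theorem commutator_norm_bound {d : ℕ} (A B : Matrix (Fin d) (Fin d) ℂ)
    (hA : A ∈ Matrix.unitaryGroup (Fin d) ℂ) (hB : B ∈ Matrix.unitaryGroup (Fin d) ℂ) :
    frobeniusNorm (A * B * A⁻¹ * B⁻¹ - 1) ≤
      Real.sqrt 2 * frobeniusNorm (A - 1) * frobeniusNorm (B - 1) := by
  classical
  have hA1 : A * Aᴴ = 1 := Matrix.mem_unitaryGroup_iff.mp hA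
  have hA2 : Aᴴ * A = 1 := Matrix.mem_unitaryGroup_iff'.mp hA
  have hB1 : B * Bᴴ = 1 := Matrix.mem_unitaryGroup_iff.mp hB
  have hB2 : Bᴴ * B = 1 := Matrix.mem_unitaryGroup_iff'.mp hB
  have hAinv : A⁻¹ = Aᴴ := Matrix.inv_eq_left_inv hA2
  have hBinv : B⁻¹ = Bᴴ := Matrix.inv_eq_left_inv hB2
  -- rewrite the commutator
  have hsplit : A * B * A⁻¹ * B⁻¹ - 1 = (A * (B - 1) - (B - 1) * A) * (Aᴴ * Bᴴ) := by
    rw [hAinv, hBinv]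
    have expand : (A * (B - 1) - (B - 1) * A) * (Aᴴ * Bᴴ)
        = A * B * Aᴴ * Bᴴ - B * (A * Aᴴ) * Bᴴ := by noncomm_ring
    rw [expand, hA1, Matrix.mul_one, hB1]
  -- obtain diagonalization of A
  obtain ⟨b, μ, hbA⟩ := unitary_exists_eigenbasis A hA
  obtain ⟨U, hU, hdiag⟩ := unitary_spectral A b μ hbA
  have hU1 : U * Uᴴ = 1 := Matrix.mem_unitaryGroup_iff.mp hU
  have hU2 : Uᴴ * U = 1 := Matrix.mem_unitaryGroup_iff'.mp hU
  set Y : Matrix (Fin d) (Fin d) ℂ := B - 1 with hY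
  set Z : Matrix (Fin d) (Fin d) ℂ := Uᴴ * Y * U with hZ
  set D : Matrix (Fin d) (Fin d) ℂ := Matrix.diagonal μ with hD
  have conj_mul : ∀ X₁ X₂ : Matrix (Fin d) (Fin d) ℂ,
      Uᴴ * (X₁ * X₂) * U = (Uᴴ * X₁ * U) * (Uᴴ * X₂ * U) := by
    intro X₁ X₂
    calc (Uᴴ * (X₁ * X₂)) * U = Uᴴ * (X₁ * ((U * Uᴴ) * X₂)) * U := by
          rw [hU1, Matrix.one_mul]
      _ = (Uᴴ * X₁ * U) * (Uᴴ * X₂ * U) := by noncomm_ring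
  have hconj : Uᴴ * (A * Y - Y * A) * U = D * Z - Z * D := by
    rw [Matrix.mul_sub, Matrix.sub_mul, conj_mul A Y, conj_mul Y A, hdiag]
  -- invariance of the Frobenius norm under the unitaries
  have hABunit : (Aᴴ * Bᴴ) * (Aᴴ * Bᴴ)ᴴ = 1 := by
    rw [Matrix.conjTranspose_mul, Matrix.conjTranspose_conjTranspose,
      Matrix.conjTranspose_conjTranspose]
    calc Aᴴ * Bᴴ * (B * A) = Aᴴ * (Bᴴ * B) * A := by noncomm_ring
      _ = 1 := by rw [hB2, Matrix.mul_one, hA2]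
  have hstarU : (Uᴴ)ᴴ * Uᴴ = 1 := by
    rw [Matrix.conjTranspose_conjTranspose, hU1]
  have conj_frob : ∀ M : Matrix (Fin d) (Fin d) ℂ,
      frobeniusNorm (Uᴴ * M * U) = frobeniusNorm M := by
    intro M
    rw [frobeniusNorm_mul_unitary _ U hU1, frobeniusNorm_unitary_mul _ Uᴴ hstarU]
  have lhs_eq : frobeniusNorm (A * B * A⁻¹ * B⁻¹ - 1) = frobeniusNorm (D * Z - Z * D) := by
    rw [hsplit, frobeniusNorm_mul_unitary _ _ hABunit, ← conj_frob (A * Y - Y * A), hconj]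
  have hA_eq : frobeniusNorm (A - 1) = frobeniusNorm (D - 1) := by
    rw [← conj_frob (A - 1), Matrix.mul_sub, Matrix.sub_mul, hdiag, Matrix.mul_one, hU2]
  have hB_eq : frobeniusNorm (B - 1) = frobeniusNorm Z := by
    rw [← conj_frob Y, hZ]
  rw [lhs_eq, hA_eq, hB_eq]
  rw [frobeniusNorm_eq, frobeniusNorm_eq, frobeniusNorm_eq]
  have key := frobSq_diag_comm μ Z
  calc Real.sqrt (frobSq (D * Z - Z * D))
      ≤ Real.sqrt (2 * (∑ k, Complex.normSq (μ k - 1)) * frobSq Z) := Real.sqrt_le_sqrt key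
    _ = Real.sqrt 2 * Real.sqrt (frobSq (D - 1)) * Real.sqrt (frobSq Z) := by
        rw [frobSq_diag_sub_one μ]
        rw [Real.sqrt_mul (mul_nonneg (by norm_num) (Finset.sum_nonneg fun k _ => Complex.normSq_nonneg _)), Real.sqrt_mul (by norm_num)]
end

section
/- Let A and B be unitary d×d matrices such that the group commutator [A,[A,B]] equals the identity and ‖B − 1‖ < 2 in Frobenius norm. Then the group commutator [A,B] equals the identity. -/
open Matrix Finset

/-- If the `(i,i)` entry of `Mᴴ * M` is zero, the `i`-th column of `M` vanishes. -/
private lemma colZeroAux {d : ℕ} (M : Matrix (Fin d) (Fin d) ℂ) (i : Fin d)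
    (h : (Mᴴ * M) i i = 0) : ∀ k, M k i = 0 := by
  have h1 : ∑ k, Complex.normSq (M k i) = 0 := by
    have h2 : (∑ k, ((Complex.normSq (M k i) : ℂ))) = 0 := by
      rw [← h, Matrix.mul_apply]
      congr 1; funext k
      simp [Matrix.conjTranspose_apply, Complex.normSq_eq_conj_mul_self]
    exact_mod_cast h2
  intro k
  have h3 : Complex.normSq (M k i) = 0 := by
    have := Finset.sum_eq_zero_iff_of_nonneg
      (fun j _ => Complex.normSq_nonneg (M j i)) |>.mp h1 k (Finset.mem_univ k)
    exact this
  exact Complex.normSq_eq_zero.mp h3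

private lemma rowZeroAux {d : ℕ} (M : Matrix (Fin d) (Fin d) ℂ) (i : Fin d)
    (h : (M * Mᴴ) i i = 0) : ∀ k, M i k = 0 := by
  have h' : ((Mᴴ)ᴴ * Mᴴ) i i = 0 := by rwa [conjTranspose_conjTranspose]
  intro k
  have := colZeroAux Mᴴ i h' k
  simpa [Matrix.conjTranspose_apply] using this

private lemma core {d : ℕ} (A' B' C' : Matrix (Fin d) (Fin d) ℂ) (δ : Fin d → ℝ)
    (hB'u : B'ᴴ * B' = 1)
    (hC'u : C'ᴴ * C' = 1)
    (hA'l : A'ᴴ * A' = 1)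
    (hCB : C' * B' = A' * B' * A'ᴴ)
    (hAC : A' * C' = C' * A')
    (hAD : A' * Matrix.diagonal (fun i => (δ i : ℂ)) = Matrix.diagonal (fun i => (δ i : ℂ)) * A')
    (hD : (C' - 1)ᴴ * (C' - 1) = Matrix.diagonal (fun i => (δ i : ℂ)))
    (hdet : C'.det = 1)
    (htr : (d : ℝ) - 2 < B'.trace.re) :
    C' = 1 := by
  classical
  set D : Matrix (Fin d) (Fin d) ℂ := Matrix.diagonal (fun i => (δ i : ℂ)) with hDdef
  have hCC'H : C' * C'ᴴ = 1 := mul_eq_one_comm.mp hC'u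
  have hexp : (C' - 1)ᴴ * (C' - 1) = C'ᴴ * C' - C'ᴴ - C' + 1 := by
    rw [conjTranspose_sub, conjTranspose_one]; noncomm_ring
  have h0 : (1 : Matrix (Fin d) (Fin d) ℂ) - C'ᴴ - C' + 1 = D := by
    rw [← hD, hexp, hC'u]
  have hC'H : C'ᴴ = (1 + 1) - D - C' := by rw [← h0]; abel
  have hC2 : C' * C' = ((1 + 1) - D) * C' - 1 := by
    have h := hC'u
    rw [hC'H, Matrix.sub_mul, sub_eq_iff_eq_add] at h
    rw [h]; abel
  have hrowD : (C' - 1) * (C' - 1)ᴴ = D := by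
    have e : (C' - 1) * (C' - 1)ᴴ =
        (C' - 1)ᴴ * (C' - 1) + (C' * C'ᴴ - C'ᴴ * C') := by
      rw [conjTranspose_sub, conjTranspose_one]; noncomm_ring
    rw [e, hCC'H, hC'u, sub_self, add_zero, hD]
  -- trace of Q_μ * B' as a sum
  have trQ : ∀ μ : ℝ,
      (Matrix.diagonal (fun i => if δ i = μ then (1:ℂ) else 0) * B').trace
        = ∑ i ∈ Finset.univ.filter (fun i => δ i = μ), B' i i := by
    intro μ
    rw [Finset.sum_filter]
    simp only [Matrix.trace, Matrix.diag, Matrix.diagonal_mul]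
    congr 1; funext i
    by_cases h : δ i = μ <;> simp [h]
  -- key claim: the trace of B' over each nonzero fiber of δ vanishes
  have key : ∀ μ : ℝ, μ ≠ 0 →
      (Matrix.diagonal (fun i => if δ i = μ then (1:ℂ) else 0) * B').trace = 0 := by
    intro μ hμ
    set q : Fin d → ℂ := fun i => if δ i = μ then 1 else 0 with hq
    set Q : Matrix (Fin d) (Fin d) ℂ := Matrix.diagonal q with hQ
    have hA'entry : ∀ i j, A' i j * (δ j : ℂ) = (δ i : ℂ) * A' i j := by
      intro i j
      have h := congrFun (congrFun hAD i) j
      simpa [hDdef, Matrix.mul_diagonal, Matrix.diagonal_mul] using h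
    have hQA : Q * A' = A' * Q := by
      ext i j
      simp only [hQ, Matrix.diagonal_mul, Matrix.mul_diagonal]
      by_cases h : δ i = δ j
      · have : q i = q j := by simp [hq, h]
        rw [this, mul_comm]
      · have hz : A' i j = 0 := by
          by_contra hnz
          have h2 := hA'entry i j
          rw [mul_comm ((δ i : ℂ))] at h2
          have := mul_left_cancel₀ hnz h2
          exact h (by exact_mod_cast this.symm)
        simp [hz]
    have hQD : Q * D = (μ : ℂ) • Q := by
      rw [hQ, hDdef, Matrix.diagonal_mul_diagonal]
      ext i j
      by_cases h : i = j
      · subst h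
        by_cases h2 : δ i = μ <;>
          simp [hq, h2, Matrix.diagonal_apply_eq, Matrix.smul_apply]
      · simp [Matrix.diagonal_apply_ne _ h, Matrix.smul_apply]
    have t1 : (Q * (C' * B')).trace = (Q * B').trace := by
      have e : Q * (C' * B') = A' * (Q * B') * A'ᴴ := by
        rw [hCB]
        calc Q * (A' * B' * A'ᴴ) = (Q * A') * B' * A'ᴴ := by noncomm_ring
          _ = (A' * Q) * B' * A'ᴴ := by rw [hQA]
          _ = A' * (Q * B') * A'ᴴ := by noncomm_ring
      rw [e, Matrix.trace_mul_cycle, hA'l, Matrix.one_mul]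
    have t2 : (Q * (C' * (C' * B'))).trace = (Q * B').trace := by
      have e : Q * (C' * (C' * B')) = A' * (Q * (C' * B')) * A'ᴴ := by
        calc Q * (C' * (C' * B'))
            = Q * (C' * (A' * B' * A'ᴴ)) := by rw [hCB]
          _ = Q * ((C' * A') * B' * A'ᴴ) := by noncomm_ring
          _ = Q * ((A' * C') * B' * A'ᴴ) := by rw [hAC]
          _ = (Q * A') * (C' * B') * A'ᴴ := by noncomm_ring
          _ = (A' * Q) * (C' * B') * A'ᴴ := by rw [hQA]
          _ = A' * (Q * (C' * B')) * A'ᴴ := by noncomm_ring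
      rw [e, Matrix.trace_mul_cycle, hA'l, Matrix.one_mul, t1]
    have e2 : Q * (C' * (C' * B')) =
        ((1 + 1 - μ : ℂ)) • (Q * (C' * B')) - Q * B' := by
      have e3 : C' * (C' * B') = ((1 + 1) - D) * (C' * B') - B' := by
        calc C' * (C' * B') = (C' * C') * B' := by rw [Matrix.mul_assoc]
          _ = ((1 + 1 - D) * C' - 1) * B' := by rw [hC2]
          _ = _ := by noncomm_ring
      have hq2 : Q * ((1 + 1 : Matrix (Fin d) (Fin d) ℂ) - D) = ((1 + 1 - μ : ℂ)) • Q := by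
        rw [Matrix.mul_sub, hQD, Matrix.mul_add, Matrix.mul_one]
        rw [sub_smul, add_smul, one_smul]
      calc Q * (C' * (C' * B')) = Q * (((1 + 1) - D) * (C' * B') - B') := by rw [e3]
        _ = (Q * ((1 + 1) - D)) * (C' * B') - Q * B' := by
            rw [Matrix.mul_sub, Matrix.mul_assoc]
        _ = ((1 + 1 - μ : ℂ)) • (Q * (C' * B')) - Q * B' := by
            rw [hq2, Matrix.smul_mul]
    have h4 := congrArg Matrix.trace e2
    rw [t2, Matrix.trace_sub, Matrix.trace_smul, t1, smul_eq_mul] at h4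
    have h5 : (μ : ℂ) * (Q * B').trace = 0 := by linear_combination h4
    have := (mul_eq_zero.mp h5).resolve_left (by exact_mod_cast hμ)
    simpa [hQ, hq] using this
  -- the sum of diagonal entries of B' over nonzero δ vanishes
  set F : Finset (Fin d) := Finset.univ.filter (fun i => δ i ≠ 0) with hF
  have hsum0 : ∑ i ∈ F, B' i i = 0 := by
    have hmap : ∀ i ∈ F, δ i ∈ F.image δ := fun i hi => Finset.mem_image_of_mem δ hi
    rw [← Finset.sum_fiberwise_of_maps_to hmap (fun i => B' i i)]
    apply Finset.sum_eq_zero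
    intro μ hμmem
    obtain ⟨i0, hi0, rfl⟩ := Finset.mem_image.mp hμmem
    have hμ0 : δ i0 ≠ 0 := (Finset.mem_filter.mp hi0).2
    have hfe : F.filter (fun i => δ i = δ i0)
        = Finset.univ.filter (fun i => δ i = δ i0) := by
      ext k
      simp only [hF, Finset.mem_filter, Finset.filter_filter, Finset.mem_univ, true_and]
      constructor
      · rintro ⟨-, h⟩; exact h
      · intro h; exact ⟨h ▸ hμ0, h⟩
    rw [hfe, ← trQ (δ i0)]
    exact key (δ i0) hμ0
  -- diagonal entries of a unitary have real part at most 1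
  have habs : ∀ i, (B' i i).re ≤ 1 := by
    intro i
    have h1 : (∑ k, ((Complex.normSq (B' k i) : ℂ))) = 1 := by
      have h := congrFun (congrFun hB'u i) i
      rw [Matrix.mul_apply] at h
      simp only [Matrix.one_apply_eq] at h
      rw [← h]
      congr 1; funext k
      simp [Matrix.conjTranspose_apply, Complex.normSq_eq_conj_mul_self]
    have h2 : ∑ k, Complex.normSq (B' k i) = 1 := by exact_mod_cast h1
    have h3 : Complex.normSq (B' i i) ≤ 1 := by
      rw [← h2]
      exact Finset.single_le_sum (f := fun k => Complex.normSq (B' k i))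
        (fun j _ => Complex.normSq_nonneg _) (Finset.mem_univ i)
    have h4 : ‖B' i i‖ ≤ 1 := by
      nlinarith [Complex.sq_norm (B' i i), norm_nonneg (B' i i)]
    exact le_trans (Complex.re_le_norm _) h4
  -- card bound
  have hcard : F.card ≤ 1 := by
    by_contra hlt
    push_neg at hlt
    have htrsplit : B'.trace = ∑ i ∈ Finset.univ.filter (fun i => ¬ δ i ≠ 0), B' i i := by
      have := Finset.sum_filter_add_sum_filter_not Finset.univ (fun i => δ i ≠ 0)
        (fun i => B' i i)
      rw [← hF] at this  -- may fail; adjust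
      rw [Matrix.trace]
      simp only [Matrix.diag]
      rw [← this, hsum0, zero_add]
    have hre : B'.trace.re ≤ ((Finset.univ.filter (fun i => ¬ δ i ≠ 0)).card : ℝ) := by
      rw [htrsplit, Complex.re_sum]
      calc ∑ i ∈ Finset.univ.filter (fun i => ¬ δ i ≠ 0), (B' i i).re
          ≤ ∑ _i ∈ Finset.univ.filter (fun i => ¬ δ i ≠ 0), (1:ℝ) :=
            Finset.sum_le_sum (fun i _ => habs i)
        _ = _ := by simp
    have hsplit := Finset.card_filter_add_card_filter_not
      (s := (Finset.univ : Finset (Fin d))) (p := fun i => δ i ≠ 0)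
    rw [← hF] at hsplit
    have hcardu : (Finset.univ : Finset (Fin d)).card = d := by simp
    have hm2 : (Finset.univ.filter (fun i => ¬ δ i ≠ 0)).card + 2 ≤ d := by omega
    have hm2' : ((Finset.univ.filter (fun i => ¬ δ i ≠ 0)).card : ℝ) + 2 ≤ (d : ℝ) := by
      exact_mod_cast hm2
    linarith
  -- now conclude C' = 1
  have hcol : ∀ i, δ i = 0 → ∀ k, (C' - 1) k i = 0 := by
    intro i hi
    apply colZeroAux
    rw [hD]
    simp [hDdef, Matrix.diagonal_apply_eq, hi]
  have hrow : ∀ i, δ i = 0 → ∀ k, (C' - 1) i k = 0 := by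
    intro i hi
    apply rowZeroAux
    rw [hrowD]
    simp [hDdef, Matrix.diagonal_apply_eq, hi]
  have hoffdiag : ∀ i k, i ≠ k → C' i k = 0 := by
    intro i k hik
    by_cases hi : δ i = 0
    · have := hrow i hi k
      simpa [Matrix.sub_apply, Matrix.one_apply_ne hik] using this
    · have hk : δ k = 0 := by
        by_contra hk
        have hiF : i ∈ F := by simp [hF, hi]
        have hkF : k ∈ F := by simp [hF, hk]
        exact hik (Finset.card_le_one.mp hcard i hiF k hkF)
      have := hcol k hk i
      simpa [Matrix.sub_apply, Matrix.one_apply_ne hik] using this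
  have hdiag1 : ∀ i, δ i = 0 → C' i i = 1 := by
    intro i hi
    have := hcol i hi i
    have h := sub_eq_zero.mp (by simpa [Matrix.sub_apply] using this)
    simpa using h
  have hCdiag : C' = Matrix.diagonal (fun i => C' i i) := by
    ext i k
    by_cases h : i = k
    · subst h; simp [Matrix.diagonal_apply_eq]
    · rw [Matrix.diagonal_apply_ne _ h]; exact hoffdiag i k h
  have hall1 : ∀ i, C' i i = 1 := by
    intro i
    by_cases hi : δ i = 0
    · exact hdiag1 i hi
    · have hiF : i ∈ F := by simp [hF, hi]
      have hdet2 : ∏ k, C' k k = 1 := by rw [hCdiag, Matrix.det_diagonal] at hdet; exact hdet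
      have herase : ∏ k ∈ Finset.univ.erase i, C' k k = 1 := by
        apply Finset.prod_eq_one
        intro k hk
        have hki : k ≠ i := (Finset.mem_erase.mp hk).1
        have hk0 : δ k = 0 := by
          by_contra hk0
          have hkF : k ∈ F := by simp [hF, hk0]
          exact hki (Finset.card_le_one.mp hcard k hkF i hiF)
        exact hdiag1 k hk0
      have := Finset.mul_prod_erase Finset.univ (fun k => C' k k) (Finset.mem_univ i)
      rw [herase, mul_one, hdet2] at this
      exact this
  rw [hCdiag]
  ext i k
  by_cases h : i = k
  · subst h; simp [hall1]
  · simp [Matrix.diagonal_apply_ne _ h, Matrix.one_apply_ne h]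
theorem commutator_trivial_of_double_commutator_trivial {d : ℕ}
    (A B : Matrix (Fin d) (Fin d) ℂ)
    (hA : A ∈ Matrix.unitaryGroup (Fin d) ℂ) (hB : B ∈ Matrix.unitaryGroup (Fin d) ℂ)
    (hcomm : A * (A * B * A⁻¹ * B⁻¹) * A⁻¹ * (A * B * A⁻¹ * B⁻¹)⁻¹ = 1)
    (hBsmall : frobeniusNorm (B - 1) < 2) :
    A * B * A⁻¹ * B⁻¹ = 1 := by
  classical
  obtain ⟨hAl, hAr⟩ := Unitary.mem_iff.mp hA
  obtain ⟨hBl, hBr⟩ := Unitary.mem_iff.mp hB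
  rw [Matrix.star_eq_conjTranspose] at hAl hAr hBl hBr
  have hAinv : A⁻¹ = Aᴴ := Matrix.inv_eq_left_inv hAl
  have hBinv : B⁻¹ = Bᴴ := Matrix.inv_eq_left_inv hBl
  rw [hAinv, hBinv] at hcomm ⊢
  -- cancellation helpers
  have cAl : ∀ X : Matrix (Fin d) (Fin d) ℂ, Aᴴ * (A * X) = X := fun X => by
    rw [← Matrix.mul_assoc, hAl, Matrix.one_mul]
  have cAr : ∀ X : Matrix (Fin d) (Fin d) ℂ, A * (Aᴴ * X) = X := fun X => by
    rw [← Matrix.mul_assoc, hAr, Matrix.one_mul]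
  have cBl : ∀ X : Matrix (Fin d) (Fin d) ℂ, Bᴴ * (B * X) = X := fun X => by
    rw [← Matrix.mul_assoc, hBl, Matrix.one_mul]
  have cBr : ∀ X : Matrix (Fin d) (Fin d) ℂ, B * (Bᴴ * X) = X := fun X => by
    rw [← Matrix.mul_assoc, hBr, Matrix.one_mul]
  set C : Matrix (Fin d) (Fin d) ℂ := A * B * Aᴴ * Bᴴ with hCdef
  -- C is unitary
  have hCsC : Cᴴ * C = 1 := by
    rw [hCdef]
    simp only [Matrix.conjTranspose_mul, Matrix.conjTranspose_conjTranspose]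
    simp only [Matrix.mul_assoc, cAl, cAr, cBl, cBr]
    rw [hBr]
  have hCCs : C * Cᴴ = 1 := mul_eq_one_comm.mp hCsC
  have cCl : ∀ X : Matrix (Fin d) (Fin d) ℂ, Cᴴ * (C * X) = X := fun X => by
    rw [← Matrix.mul_assoc, hCsC, Matrix.one_mul]
  have cCr : ∀ X : Matrix (Fin d) (Fin d) ℂ, C * (Cᴴ * X) = X := fun X => by
    rw [← Matrix.mul_assoc, hCCs, Matrix.one_mul]
  have hCinv : C⁻¹ = Cᴴ := Matrix.inv_eq_left_inv hCsC
  rw [hCinv] at hcomm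
  -- A commutes with C
  have hAC : A * C = C * A := by
    have h1 : A * C * Aᴴ * Cᴴ * C = C := by rw [hcomm, Matrix.one_mul]
    have h2 : A * C * Aᴴ = C := by
      calc A * C * Aᴴ = A * C * Aᴴ * Cᴴ * C := by
            rw [Matrix.mul_assoc (A * C * Aᴴ), hCsC, Matrix.mul_one]
        _ = C := h1
    calc A * C = A * C * (Aᴴ * A) := by rw [hAl, Matrix.mul_one]
      _ = (A * C * Aᴴ) * A := by noncomm_ring
      _ = C * A := by rw [h2]
  have hACH : A * Cᴴ = Cᴴ * A := by
    calc A * Cᴴ = (Cᴴ * C) * (A * Cᴴ) := by rw [hCsC, Matrix.one_mul]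
      _ = Cᴴ * (C * A) * Cᴴ := by noncomm_ring
      _ = Cᴴ * (A * C) * Cᴴ := by rw [hAC]
      _ = Cᴴ * A * (C * Cᴴ) := by noncomm_ring
      _ = Cᴴ * A := by rw [hCCs, Matrix.mul_one]
  -- C * B = A * B * Aᴴ
  have hCB : C * B = A * B * Aᴴ := by
    rw [hCdef, Matrix.mul_assoc (A * B * Aᴴ) Bᴴ B, hBl, Matrix.mul_one]
  -- the Hermitian matrix K
  set K : Matrix (Fin d) (Fin d) ℂ := (C - 1)ᴴ * (C - 1) with hKdef
  have hK : K.IsHermitian := Matrix.isHermitian_conjTranspose_mul_self (C - 1)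
  have hAK : A * K = K * A := by
    have e : K = (1 + 1) - Cᴴ - C := by
      rw [hKdef, Matrix.conjTranspose_sub, Matrix.conjTranspose_one, Matrix.sub_mul,
        Matrix.mul_sub, Matrix.mul_sub, hCsC]
      noncomm_ring
    rw [e]
    simp only [Matrix.mul_sub, Matrix.sub_mul, Matrix.mul_add, Matrix.add_mul,
      Matrix.mul_one, Matrix.one_mul, hAC, hACH]
  set U : Matrix (Fin d) (Fin d) ℂ := (hK.eigenvectorUnitary : Matrix (Fin d) (Fin d) ℂ)
    with hUdef
  obtain ⟨hUl, hUr⟩ := Unitary.mem_iff.mp hK.eigenvectorUnitary.2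
  rw [Matrix.star_eq_conjTranspose] at hUl hUr
  rw [← hUdef] at hUl hUr
  have cUl : ∀ X : Matrix (Fin d) (Fin d) ℂ, Uᴴ * (U * X) = X := fun X => by
    rw [← Matrix.mul_assoc, hUl, Matrix.one_mul]
  have cUr : ∀ X : Matrix (Fin d) (Fin d) ℂ, U * (Uᴴ * X) = X := fun X => by
    rw [← Matrix.mul_assoc, hUr, Matrix.one_mul]
  set δ : Fin d → ℝ := hK.eigenvalues with hδdef
  have hspec : K = U * Matrix.diagonal (fun i => (δ i : ℂ)) * Uᴴ := by
    have := hK.spectral_theorem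
    rw [Unitary.conjStarAlgAut_apply, Matrix.star_eq_conjTranspose, ← hUdef] at this
    exact this
  have hDU : Matrix.diagonal (fun i => (δ i : ℂ)) = Uᴴ * K * U := by
    rw [hspec]
    simp only [Matrix.mul_assoc, cUl]
    rw [hUl, Matrix.mul_one]
  set A' : Matrix (Fin d) (Fin d) ℂ := Uᴴ * A * U with hA'def
  set B' : Matrix (Fin d) (Fin d) ℂ := Uᴴ * B * U with hB'def
  set C' : Matrix (Fin d) (Fin d) ℂ := Uᴴ * C * U with hC'def
  have hconjmul : ∀ X Y : Matrix (Fin d) (Fin d) ℂ,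
      (Uᴴ * X * U) * (Uᴴ * Y * U) = Uᴴ * (X * Y) * U := by
    intro X Y
    simp only [Matrix.mul_assoc, cUr]
  have hconjH : ∀ X : Matrix (Fin d) (Fin d) ℂ, (Uᴴ * X * U)ᴴ = Uᴴ * Xᴴ * U := by
    intro X
    simp only [Matrix.conjTranspose_mul, Matrix.conjTranspose_conjTranspose,
      Matrix.mul_assoc]
  have hB'u : B'ᴴ * B' = 1 := by
    rw [hB'def, hconjH, hconjmul, hBl, Matrix.mul_one, hUl]
  have hC'u : C'ᴴ * C' = 1 := by
    rw [hC'def, hconjH, hconjmul, hCsC, Matrix.mul_one, hUl]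
  have hA'l : A'ᴴ * A' = 1 := by
    rw [hA'def, hconjH, hconjmul, hAl, Matrix.mul_one, hUl]
  have hCB' : C' * B' = A' * B' * A'ᴴ := by
    rw [hA'def, hB'def, hC'def, hconjH, hconjmul, hconjmul, hconjmul, hCB]
  have hAC' : A' * C' = C' * A' := by
    rw [hA'def, hC'def, hconjmul, hconjmul, hAC]
  have hAD' : A' * Matrix.diagonal (fun i => (δ i : ℂ))
      = Matrix.diagonal (fun i => (δ i : ℂ)) * A' := by
    rw [hDU, hA'def]
    calc (Uᴴ * A * U) * (Uᴴ * K * U) = Uᴴ * (A * K) * U := hconjmul A K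
      _ = Uᴴ * (K * A) * U := by rw [hAK]
      _ = (Uᴴ * K * U) * (Uᴴ * A * U) := (hconjmul K A).symm
  have hD' : (C' - 1)ᴴ * (C' - 1) = Matrix.diagonal (fun i => (δ i : ℂ)) := by
    have hsub : C' - 1 = Uᴴ * (C - 1) * U := by
      rw [hC'def, Matrix.mul_sub Uᴴ C 1, Matrix.mul_one, Matrix.sub_mul, hUl]
    rw [hsub, hconjH, hconjmul, ← hKdef, hDU]
  have hdetAux : ∀ X : Matrix (Fin d) (Fin d) ℂ, Xᴴ * X = 1 → Xᴴ.det * X.det = 1 := by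
    intro X hX
    rw [← Matrix.det_mul, hX, Matrix.det_one]
  have hdetC : C.det = 1 := by
    have h1 := hdetAux A hAl
    have h2 := hdetAux B hBl
    rw [hCdef, Matrix.det_mul, Matrix.det_mul, Matrix.det_mul]
    calc A.det * B.det * Aᴴ.det * Bᴴ.det
        = (Aᴴ.det * A.det) * (Bᴴ.det * B.det) := by ring
      _ = 1 := by rw [h1, h2, mul_one]
  have hdet' : C'.det = 1 := by
    have h3 := hdetAux U hUl
    rw [hC'def, Matrix.det_mul, Matrix.det_mul]
    calc Uᴴ.det * C.det * U.det = (Uᴴ.det * U.det) * C.det := by ring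
      _ = 1 := by rw [h3, hdetC, mul_one]
  have htrB' : B'.trace = B.trace := by
    rw [hB'def, Matrix.trace_mul_cycle, hUr, Matrix.one_mul]
  have htr' : (d : ℝ) - 2 < B'.trace.re := by
    have h4 : ((B - 1)ᴴ * (B - 1)).trace.re < 4 := by
      have h := hBsmall
      unfold frobeniusNorm at h
      have h5 := (Real.sqrt_lt' (by norm_num : (0:ℝ) < 2)).mp h
      have h6 : (2:ℝ) ^ 2 = 4 := by norm_num
      rw [h6] at h5
      exact h5
    have hexpB : (B - 1)ᴴ * (B - 1) = (1 + 1) - Bᴴ - B := by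
      rw [Matrix.conjTranspose_sub, Matrix.conjTranspose_one, Matrix.sub_mul,
        Matrix.mul_sub, Matrix.mul_sub, hBl]
      noncomm_ring
    rw [hexpB] at h4
    rw [Matrix.trace_sub, Matrix.trace_sub, Matrix.trace_add, Matrix.trace_one,
      Matrix.trace_conjTranspose] at h4
    simp only [Complex.sub_re, Complex.add_re, Complex.one_re, Complex.star_def,
      Complex.conj_re, Complex.natCast_re, Fintype.card_fin] at h4
    rw [htrB']
    linarith
  have hC'1 : C' = 1 := core A' B' C' δ hB'u hC'u hA'l hCB' hAC' hAD' hD' hdet' htr'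
  have : C = 1 := by
    have := congrArg (fun X => U * X * Uᴴ) hC'1
    simp only [hC'def] at this
    rw [Matrix.mul_one, hUr] at this
    rw [← this]
    calc C = (U * Uᴴ) * C * (U * Uᴴ) := by rw [hUr, Matrix.one_mul, Matrix.mul_one]
      _ = U * (Uᴴ * C * U) * Uᴴ := by noncomm_ring
  exact this
end

section
/- Let V be a finite-dimensional real vector space with a semidefinite symmetric bilinear form, and W a subspace of V. Then V = W ⊕ W^⊥ if and only if V^⊥ ∩ W = {0}. -/
lemma psd_eq_zero_of_self_eq_zero {V : Type*} [AddCommGroup V] [Module ℝ V]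
    (B : LinearMap.BilinForm ℝ V) (hsymm : B.IsSymm) (hpsd : ∀ x : V, 0 ≤ B x x)
    {x : V} (hx : B x x = 0) (y : V) : B x y = 0 := by
  have hsym : B y x = B x y := by
    have := hsymm.eq y x; simpa using this
  have key : ∀ t : ℝ, 0 ≤ t ^ 2 * B y y + 2 * t * B x y := by
    intro t
    have h := hpsd (x + t • y)
    simp only [LinearMap.BilinForm.add_left, LinearMap.BilinForm.add_right,
      LinearMap.BilinForm.smul_left, LinearMap.BilinForm.smul_right, hx, hsym] at h
    ring_nf at h ⊢
    linarith [h]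
  rcases lt_or_eq_of_le (hpsd y) with hy | hy
  · set a := B x y with ha
    set b := B y y with hb
    have hyne : b ≠ 0 := ne_of_gt hy
    have h1 := key (-a / b)
    have heq : (-a / b) ^ 2 * b + 2 * (-a / b) * a = -a ^ 2 / b := by
      field_simp; ring
    rw [heq] at h1
    have h2 : 0 ≤ -a ^ 2 := by
      have := mul_nonneg h1 hy.le
      rwa [div_mul_cancel₀] at this
      exact hyne
    have h4 : a ^ 2 = 0 := le_antisymm (by linarith) (sq_nonneg a)
    exact pow_eq_zero_iff (n := 2) (by norm_num) |>.mp h4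
  · have h1 := key (-(B x y))
    have h2 := key (B x y)
    nlinarith [h1, h2]

theorem isCompl_orthogonal_iff_radical_inf_eq_bot {V : Type*} [AddCommGroup V] [Module ℝ V]
    [FiniteDimensional ℝ V] (B : LinearMap.BilinForm ℝ V) (hsymm : B.IsSymm)
    (hsemidef : (∀ x : V, 0 ≤ B x x) ∨ (∀ x : V, B x x ≤ 0))
    (W : Submodule ℝ V) :
    IsCompl W (B.orthogonal W) ↔ B.orthogonal ⊤ ⊓ W = ⊥ := by
  constructor
  · intro h
    exact (h.disjoint.symm.mono_left (B.orthogonal_le le_top)).eq_bot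
  · intro h
    refine LinearMap.BilinForm.isCompl_orthogonal_of_restrict_nondegenerate hsymm.isRefl ?_
    refine (LinearMap.IsRefl.nondegenerate_iff_separatingLeft (B := B.restrict W) (fun x y hxy => hsymm.isRefl x y hxy)).mpr ?_
    rintro ⟨x, hxW⟩ hx
    have hxx : B x x = 0 := by
      have := hx ⟨x, hxW⟩
      simpa using this
    have hrad : x ∈ B.orthogonal ⊤ := by
      intro n _
      have hxn : B x n = 0 := by
        rcases hsemidef with hpsd | hnsd
        · exact psd_eq_zero_of_self_eq_zero B hsymm hpsd hxx n
        · have hpsd : ∀ z : V, 0 ≤ (-B) z z := fun z => by simpa using hnsd z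
          have hsymm' : (-B).IsSymm := ⟨fun a b => by
            have := hsymm.eq a b; simp at this ⊢; linarith [this]⟩
          have hxx' : (-B) x x = 0 := by simpa using hxx
          have := psd_eq_zero_of_self_eq_zero (-B) hsymm' hpsd hxx' n
          simpa using this
      simpa [LinearMap.BilinForm.IsOrtho] using hsymm.isRefl x n hxn
    have hmem : x ∈ B.orthogonal ⊤ ⊓ W := ⟨hrad, hxW⟩
    rw [h] at hmem
    simpa using hmem
end

section
/- Let U ∈ U(d) be a unitary matrix all of whose eigenvalues have nonnegative real part, and let X be the principal logarithm of U (the skew-Hermitian logarithm with spectrum in (−π, π]). Then |tr(X)/(2πi)| ≤ (d/(2π))·acos(1 − ‖U − 1‖²/(2d)) ≤ d/4, where ‖·‖ is the Frobenius norm. -/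
open scoped Matrix
open Real Complex

theorem trace_principal_log_bound {d : ℕ} (hd : 0 < d)
    (θ : Fin d → ℝ) (hθ : ∀ j, |θ j| ≤ π / 2)
    (V : Matrix (Fin d) (Fin d) ℂ) (hV : V ∈ Matrix.unitaryGroup (Fin d) ℂ)
    (U X : Matrix (Fin d) (Fin d) ℂ)
    (hU : U = V * Matrix.diagonal (fun j => Complex.exp (Complex.I * θ j)) * V⁻¹)
    (hX : X = V * Matrix.diagonal (fun j => Complex.I * θ j) * V⁻¹) :
    ‖X.trace / (2 * π * Complex.I)‖ ≤
        (d / (2 * π)) * Real.arccos (1 - (frobeniusNorm (U - 1)) ^ 2 / (2 * d)) ∧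
      (d / (2 * π)) * Real.arccos (1 - (frobeniusNorm (U - 1)) ^ 2 / (2 * d)) ≤ d / 4 := by
  have hπ : (0:ℝ) < π := Real.pi_pos
  have hd' : (0:ℝ) < d := by exact_mod_cast hd
  have hVinv : V⁻¹ = Vᴴ := by
    apply Matrix.inv_eq_left_inv
    simpa [Matrix.star_eq_conjTranspose] using hV.1
  have hVV : V⁻¹ * V = 1 := by
    rw [hVinv]; simpa [Matrix.star_eq_conjTranspose] using hV.1
  have hVV' : V * V⁻¹ = 1 := by
    rw [hVinv]; simpa [Matrix.star_eq_conjTranspose] using hV.2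
  set C : ℝ := ∑ j, Real.cos (θ j) with hC
  set A : ℝ := ∑ j, |θ j| with hA
  -- trace of X
  have htr : X.trace = Complex.I * (∑ j, (θ j : ℂ)) := by
    rw [hX, Matrix.trace_mul_cycle, hVV, Matrix.one_mul,
      Matrix.trace_diagonal, Finset.mul_sum]
  -- U - 1 as conjugated diagonal
  have hU1 : U - 1 = V * Matrix.diagonal (fun j => Complex.exp (Complex.I * θ j) - 1) * V⁻¹ := by
    rw [hU]
    have h0 : Matrix.diagonal (fun j => Complex.exp (Complex.I * θ j) - 1)
        = Matrix.diagonal (fun j => Complex.exp (Complex.I * θ j)) - 1 := by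
      rw [← Matrix.diagonal_one, Matrix.diagonal_sub]
    rw [h0, Matrix.mul_sub, Matrix.mul_one, Matrix.sub_mul, hVV']
  -- trace computation for the Frobenius norm
  have hfrob : ((U - 1)ᴴ * (U - 1)).trace.re = ∑ j, (2 - 2 * Real.cos (θ j)) := by
    rw [hU1]
    have h1 : (V * Matrix.diagonal (fun j => Complex.exp (Complex.I * θ j) - 1) * V⁻¹)ᴴ
        = V * Matrix.diagonal (fun j => starRingEnd ℂ (Complex.exp (Complex.I * θ j) - 1)) * V⁻¹ := by
      rw [Matrix.conjTranspose_mul, Matrix.conjTranspose_mul, hVinv,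
        Matrix.conjTranspose_conjTranspose, Matrix.diagonal_conjTranspose, Matrix.mul_assoc]
      rfl
    rw [h1]
    have h2 : V * Matrix.diagonal (fun j => starRingEnd ℂ (Complex.exp (Complex.I * θ j) - 1)) * V⁻¹ *
        (V * Matrix.diagonal (fun j => Complex.exp (Complex.I * θ j) - 1) * V⁻¹)
        = V * Matrix.diagonal (fun j =>
            starRingEnd ℂ (Complex.exp (Complex.I * θ j) - 1) * (Complex.exp (Complex.I * θ j) - 1)) * V⁻¹ := by
      simp only [Matrix.mul_assoc]
      rw [← Matrix.mul_assoc V⁻¹ V, hVV, Matrix.one_mul,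
        ← Matrix.mul_assoc (Matrix.diagonal _) (Matrix.diagonal _) V⁻¹,
        Matrix.diagonal_mul_diagonal]
    rw [h2, Matrix.trace_mul_cycle, hVV, Matrix.one_mul,
      Matrix.trace_diagonal]
    rw [Complex.re_sum]
    congr 1; funext j
    have : starRingEnd ℂ (Complex.exp (Complex.I * θ j) - 1) * (Complex.exp (Complex.I * θ j) - 1)
        = (Complex.normSq (Complex.exp (Complex.I * θ j) - 1) : ℂ) := by
      rw [Complex.normSq_eq_conj_mul_self]
    rw [this, Complex.ofReal_re]
    have he : Complex.exp (Complex.I * θ j) = Complex.ofReal (Real.cos (θ j)) +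
        Complex.ofReal (Real.sin (θ j)) * Complex.I := by
      rw [mul_comm, Complex.exp_mul_I, ← Complex.ofReal_cos, ← Complex.ofReal_sin]
    rw [he]
    simp only [Complex.normSq_apply, Complex.sub_re, Complex.add_re, Complex.ofReal_re,
      Complex.mul_re, Complex.I_re, Complex.I_im, Complex.ofReal_im, Complex.sub_im,
      Complex.add_im, Complex.mul_im, Complex.one_re, Complex.one_im]
    nlinarith [Real.sin_sq_add_cos_sq (θ j)]
  have hsum : ∑ j, (2 - 2 * Real.cos (θ j)) = 2 * d - 2 * C := by
    rw [Finset.sum_sub_distrib, ← Finset.mul_sum]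
    simp [hC, mul_comm]
  have hcos_nonneg : ∀ j, 0 ≤ Real.cos (θ j) := by
    intro j
    apply Real.cos_nonneg_of_mem_Icc
    have := hθ j
    constructor <;> [linarith [abs_le.1 this |>.1]; linarith [abs_le.1 this |>.2]]
  have hcos_le_one : ∀ j, Real.cos (θ j) ≤ 1 := fun j => Real.cos_le_one _
  have hC0 : 0 ≤ C := Finset.sum_nonneg fun j _ => hcos_nonneg j
  have hCd : C ≤ d := by
    calc C ≤ ∑ _j : Fin d, (1:ℝ) := Finset.sum_le_sum fun j _ => hcos_le_one j
    _ = d := by simp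
  have hfrob2 : frobeniusNorm (U - 1) ^ 2 = 2 * d - 2 * C := by
    unfold frobeniusNorm
    rw [Real.sq_sqrt]
    · rw [hfrob, hsum]
    · rw [hfrob, hsum]; linarith
  have harg : 1 - frobeniusNorm (U - 1) ^ 2 / (2 * d) = C / d := by
    rw [hfrob2]; field_simp; try ring
  -- Jensen: C/d ≤ cos (A/d)
  have hAnn : 0 ≤ A := Finset.sum_nonneg fun j _ => abs_nonneg _
  have hAd : A / d ≤ π / 2 := by
    have : A ≤ d * (π / 2) := by
      calc A ≤ ∑ _j : Fin d, (π/2) := Finset.sum_le_sum fun j _ => hθ j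
      _ = d * (π/2) := by simp [mul_comm]
    rw [div_le_iff₀ hd'] at *
    linarith [this]
  have hjensen : C / d ≤ Real.cos (A / d) := by
    have key := (strictConcaveOn_cos_Icc.concaveOn).le_map_sum (t := Finset.univ)
      (w := fun _ : Fin d => (d:ℝ)⁻¹) (p := fun j => |θ j|)
      (fun i _ => by positivity)
      (by simp [Finset.card_univ]; field_simp)
      (fun i _ => by
        constructor
        · linarith [abs_nonneg (θ i), hπ]
        · exact hθ i)
    have h1 : ∑ i, (d:ℝ)⁻¹ • Real.cos |θ i| = C / d := by
      simp only [smul_eq_mul, ← Finset.mul_sum]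
      rw [hC]
      have : ∀ i, Real.cos |θ i| = Real.cos (θ i) := fun i => Real.cos_abs _
      simp [this]
      ring
    have h2 : ∑ i, (d:ℝ)⁻¹ • |θ i| = A / d := by
      simp only [smul_eq_mul, ← Finset.mul_sum, hA]
      ring
    rw [h1, h2] at key
    exact key
  -- hence A/d ≤ arccos (C/d)
  have hkey : A / d ≤ Real.arccos (C / d) := by
    by_contra h
    push_neg at h
    have h1 : Real.cos (A / d) < Real.cos (Real.arccos (C / d)) := by
      apply Real.strictAntiOn_cos
      · exact ⟨Real.arccos_nonneg _, Real.arccos_le_pi _⟩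
      · exact ⟨div_nonneg hAnn hd'.le, by linarith⟩
      · exact h
    rw [Real.cos_arccos (by linarith [div_nonneg hC0 hd'.le]) (by
      rw [div_le_one hd']; exact hCd)] at h1
    linarith
  have harcpos : Real.arccos (C / d) ≤ π / 2 := Real.arccos_le_pi_div_two.2 (div_nonneg hC0 hd'.le)
  constructor
  · -- first inequality
    have h1 : ‖X.trace / (2 * π * Complex.I)‖ = |∑ j, θ j| / (2 * π) := by
      rw [htr]
      have h0 : Complex.I * (∑ j, (θ j : ℂ)) = ((∑ j, θ j : ℝ) : ℂ) * Complex.I := by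
        push_cast; ring
      rw [h0, norm_div, norm_mul, Complex.norm_real, Complex.norm_I, mul_one, Real.norm_eq_abs]
      congr 1
      rw [norm_mul, norm_mul, Complex.norm_two, Complex.norm_real, Complex.norm_I, Real.norm_eq_abs,
        abs_of_pos hπ, mul_one]
    rw [h1, harg]
    have h2 : |∑ j, θ j| ≤ A := Finset.abs_sum_le_sum_abs _ _
    have h3 : A ≤ d * Real.arccos (C / d) := by
      rw [div_le_iff₀ hd'] at hkey; linarith [hkey]
    rw [div_le_iff₀ (by positivity)]
    calc |∑ j, θ j| ≤ A := h2
    _ ≤ d * Real.arccos (C / d) := h3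
    _ = d / (2 * π) * Real.arccos (C / d) * (2 * π) := by field_simp; try ring
  · rw [harg]
    have : d / (2 * π) * Real.arccos (C / d) ≤ d / (2 * π) * (π / 2) := by
      apply mul_le_mul_of_nonneg_left harcpos (by positivity)
    calc d / (2 * π) * Real.arccos (C / d) ≤ d / (2 * π) * (π / 2) := this
    _ = d / 4 := by field_simp; try ring
end
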